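/- For the vector |φ_{0|0}⟩ = √(3/36)|0⟩ ⊕ √(1/36)(|0⟩+|4⟩−conj(γ₂)|6⟩) ∈ ℂ²⊕ℂ⁹ and the states |ψ_l^{(0)}⟩ as in the paper, the three vectors in ℂ¹¹ obtained by contracting the first factor of |ψ_l^{(0)}⟩ with ⟨φ_{0|0}| (i.e., (⟨φ_{0|0}| ⊗ I)|ψ_l^{(0)}⟩ for l = 0,1,2) are pairwise orthogonal and have equal norms. -/

import Mathlib

open Complex

noncomputable def Xmat (k : ℕ) : Matrix (Fin k) (Fin k) ℂ :=
  fun i j => if (i : ℕ) = ((j : ℕ) + 1) % k then 1 else 0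

noncomputable def Zmat (k : ℕ) : Matrix (Fin k) (Fin k) ℂ :=
  Matrix.diagonal fun l => Complex.exp (2 * Real.pi * Complex.I * (l : ℕ) / (k : ℕ))

noncomputable def PhiME (k : ℕ) : EuclideanSpace ℂ (Fin k × Fin k) :=
  WithLp.toLp 2 fun p => if p.1 = p.2 then ((1 / Real.sqrt k : ℝ) : ℂ) else 0

/-- `|Ψ⟩ = (1/√3)(|0⟩⊗|0⟩+|1⟩⊗|1⟩+|2⟩⊗|2⟩) ∈ ℂ⁹ ⊗ ℂ⁹`. -/
noncomputable def PsiNine : EuclideanSpace ℂ (Fin 9 × Fin 9) :=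
  WithLp.toLp 2 fun p => if p.1 = p.2 ∧ (p.1 : ℕ) < 3 then ((1 / Real.sqrt 3 : ℝ) : ℂ) else 0

noncomputable def opL {k : ℕ} (U : Matrix (Fin k) (Fin k) ℂ)
    (v : EuclideanSpace ℂ (Fin k × Fin k)) : EuclideanSpace ℂ (Fin k × Fin k) :=
  WithLp.toLp 2 fun p => ∑ i, U p.1 i * v (i, p.2)

noncomputable def lift2 (v : EuclideanSpace ℂ (Fin 2 × Fin 2)) :
    EuclideanSpace ℂ (Fin 11 × Fin 11) :=
  WithLp.toLp 2 fun p => if h : (p.1 : ℕ) < 2 ∧ (p.2 : ℕ) < 2 then v (⟨p.1, h.1⟩, ⟨p.2, h.2⟩) else 0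

noncomputable def lift9 (v : EuclideanSpace ℂ (Fin 9 × Fin 9)) :
    EuclideanSpace ℂ (Fin 11 × Fin 11) :=
  WithLp.toLp 2 fun p =>
    if h : 2 ≤ (p.1 : ℕ) ∧ 2 ≤ (p.2 : ℕ) then
      v (⟨(p.1 : ℕ) - 2, by have := p.1.isLt; omega⟩,
         ⟨(p.2 : ℕ) - 2, by have := p.2.isLt; omega⟩)
    else 0

/-- The post-measurement states `|ψ_l^{(0)}⟩`. -/
noncomputable def psiFam0 (γ₁ γ₂ : ℂ) : Fin 3 → EuclideanSpace ℂ (Fin 11 × Fin 11) :=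
  ![(Real.sqrt (2 / 11) : ℂ) • lift2 (PhiME 2)
      + (Real.sqrt (9 / 11) : ℂ) • lift9 PsiNine,
    (Real.sqrt (2 / 11) : ℂ) • (γ₁ • lift2 (opL (Xmat 2) (PhiME 2)))
      + (Real.sqrt (9 / 11) : ℂ) • lift9 (opL (Xmat 9 ^ 3) PsiNine),
    (Real.sqrt (2 / 11) : ℂ) • (γ₂ • lift2 (opL (Zmat 2) (PhiME 2)))
      + (Real.sqrt (9 / 11) : ℂ) • lift9 (opL (Xmat 9 ^ 6) PsiNine)]


/-- Standard basis vector of `ℂ¹¹`. -/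
noncomputable def e11 (i : Fin 11) : EuclideanSpace ℂ (Fin 11) :=
  EuclideanSpace.single i (1 : ℂ)

/-- `|φ_{0|0}⟩ = √(3/36)|0⟩ ⊕ √(1/36)(|0⟩+|4⟩−conj(γ₂)|6⟩)`, with the `ℂ⁹` index `m`
embedded as the 11-index `m + 2`. -/
noncomputable def phi00 (γ₂ : ℂ) : EuclideanSpace ℂ (Fin 11) :=
  (Real.sqrt (3 / 36) : ℂ) • e11 0
    + (Real.sqrt (1 / 36) : ℂ) • (e11 2 + e11 6 - (starRingEnd ℂ γ₂) • e11 8)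

/-- Contraction of the first tensor factor with `⟨φ|`: `(⟨φ| ⊗ I)|ψ⟩`. -/
noncomputable def contractA (φ : EuclideanSpace ℂ (Fin 11))
    (ψ : EuclideanSpace ℂ (Fin 11 × Fin 11)) : EuclideanSpace ℂ (Fin 11) :=
  WithLp.toLp 2 fun j => ∑ i, (starRingEnd ℂ) (φ i) * ψ (i, j)

noncomputable def shiftM (s : ℕ) : Matrix (Fin 9) (Fin 9) ℂ :=
  fun i j => if (i : ℕ) = ((j : ℕ) + s) % 9 then 1 else 0

lemma shift_mul (a b : ℕ) : shiftM a * shiftM b = shiftM (a + b) := by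
  ext i j
  rw [Matrix.mul_apply]
  rw [Finset.sum_eq_single (⟨((j : ℕ) + b) % 9, Nat.mod_lt _ (by norm_num)⟩ : Fin 9)]
  · have h : ((j : ℕ) + b + a) = (j : ℕ) + (a + b) := by omega
    simp [shiftM, Nat.mod_add_mod, h]
  · intro m _ hm
    have : (m : ℕ) ≠ ((j : ℕ) + b) % 9 := fun h => hm (Fin.ext h)
    simp [shiftM, this]
  · intro h
    exact absurd (Finset.mem_univ _) h

lemma Xmat9_eq : Xmat 9 = shiftM 1 := rfl

lemma hX3 : Xmat 9 ^ 3 = shiftM 3 := by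
  rw [Xmat9_eq, pow_succ, pow_succ, pow_one, shift_mul, shift_mul]

lemma hX6 : Xmat 9 ^ 6 = shiftM 6 := by
  rw [Xmat9_eq, pow_succ, pow_succ, pow_succ, pow_succ, pow_succ, pow_one,
    shift_mul, shift_mul, shift_mul, shift_mul, shift_mul]

lemma hZ : Zmat 2 = Matrix.diagonal ![1, -1] := by
  ext i j
  fin_cases i <;> fin_cases j <;>
    simp [Zmat, Matrix.diagonal] <;>
  · rw [show (2 * (Real.pi:ℂ) * Complex.I / 2) = Real.pi * Complex.I by ring]
    exact Complex.exp_pi_mul_I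

lemma inv_sqrt (x : ℝ) : 1 / Real.sqrt x = Real.sqrt (1/x) := by
  rw [one_div, ← Real.sqrt_inv, one_div]

lemma hc1 : Real.sqrt (3/36) * (Real.sqrt (2/11) * (1 / Real.sqrt 2)) = Real.sqrt (1/132) := by
  rw [inv_sqrt, ← Real.sqrt_mul (by norm_num), ← Real.sqrt_mul (by norm_num)]
  norm_num

lemma hc2 : Real.sqrt (1/36) * (Real.sqrt (9/11) * (1 / Real.sqrt 3)) = Real.sqrt (1/132) := by
  rw [inv_sqrt, ← Real.sqrt_mul (by norm_num), ← Real.sqrt_mul (by norm_num)]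
  norm_num

noncomputable def cc : ℝ := Real.sqrt (1/132)

lemma sq9 : Real.sqrt 9 = 3 := by
  rw [show (9:ℝ) = 3^2 by norm_num, Real.sqrt_sq (by norm_num)]
lemma sq36 : Real.sqrt 36 = 6 := by
  rw [show (36:ℝ) = 6^2 by norm_num, Real.sqrt_sq (by norm_num)]
lemma sq12 : Real.sqrt 12 = 2 * Real.sqrt 3 := by
  rw [show (12:ℝ) = 2^2 * 3 by norm_num, Real.sqrt_mul (by positivity), Real.sqrt_sq (by norm_num)]
lemma sq132 : Real.sqrt 132 = 2 * (Real.sqrt 3 * Real.sqrt 11) := by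
  rw [show (132:ℝ) = 2^2 * (3 * 11) by norm_num, Real.sqrt_mul (by positivity),
    Real.sqrt_sq (by norm_num), Real.sqrt_mul (by norm_num)]

lemma opX2 : opL (Xmat 2) (PhiME 2) =
    WithLp.toLp 2 fun (p : Fin 2 × Fin 2) => if (p.1 : ℕ) = ((p.2 : ℕ) + 1) % 2 then ((1 / Real.sqrt 2 : ℝ) : ℂ) else 0 := by
  ext p
  obtain ⟨a, b⟩ := p
  fin_cases a <;> fin_cases b <;>
    simp [opL, Xmat, PhiME, Fin.sum_univ_succ]

lemma opZ : opL (Zmat 2) (PhiME 2) =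
    WithLp.toLp 2 fun (p : Fin 2 × Fin 2) => if p.1 = 0 ∧ p.2 = 0 then ((1 / Real.sqrt 2 : ℝ) : ℂ)
      else if p.1 = 1 ∧ p.2 = 1 then -((1 / Real.sqrt 2 : ℝ) : ℂ) else 0 := by
  ext p
  obtain ⟨a, b⟩ := p
  fin_cases a <;> fin_cases b <;>
    simp [opL, hZ, Matrix.diagonal, PhiME, Fin.sum_univ_succ]

lemma opShift (s : ℕ) : opL (shiftM s) PsiNine =
    WithLp.toLp 2 fun (p : Fin 9 × Fin 9) => if (p.1 : ℕ) = ((p.2 : ℕ) + s) % 9 ∧ (p.2 : ℕ) < 3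
      then ((1 / Real.sqrt 3 : ℝ) : ℂ) else 0 := by
  ext p
  obtain ⟨a, b⟩ := p
  simp only [opL, shiftM, PsiNine, PiLp.toLp_apply]
  rw [Finset.sum_eq_single b]
  · by_cases h : (a : ℕ) = ((b : ℕ) + s) % 9 <;> by_cases h2 : (b : ℕ) < 3 <;>
      simp [h, h2]
  · intro m _ hm
    simp [hm]
  · intro h
    exact absurd (Finset.mem_univ _) h

set_option maxHeartbeats 1000000 in
lemma v0_eq (γ₁ γ₂ : ℂ) :
    contractA (phi00 γ₂) (psiFam0 γ₁ γ₂ 0)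
      = WithLp.toLp 2 fun j : Fin 11 => if j = 0 ∨ j = 2 then (cc : ℂ) else 0 := by
  have h2 : Real.sqrt 2 ≠ 0 := by positivity
  have h3 : Real.sqrt 3 ≠ 0 := by positivity
  have h11 : Real.sqrt 11 ≠ 0 := by positivity
  ext j
  fin_cases j <;>
  · simp only [psiFam0, Matrix.cons_val_zero, contractA, Fin.sum_univ_succ, Fin.sum_univ_zero]
    simp only [phi00, e11, PiLp.add_apply, PiLp.smul_apply, PiLp.sub_apply,
      EuclideanSpace.single_apply, smul_eq_mul, lift2, lift9, PiLp.toLp_apply, PhiME, PsiNine]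
    norm_num [cc, Fin.ext_iff, show ((1:Fin 11):ℕ) = 1 from rfl, show ((2:Fin 11):ℕ) = 2 from rfl,
      show ((3:Fin 11):ℕ) = 3 from rfl, show ((6:Fin 11):ℕ) = 6 from rfl,
      show ((8:Fin 11):ℕ) = 8 from rfl, sq9, sq36, sq12, sq132, map_ofNat]
    first
    | done
    | (push_cast; field_simp <;> ring)

set_option maxHeartbeats 1000000 in
lemma v1_eq (γ₁ γ₂ : ℂ) :
    contractA (phi00 γ₂) (psiFam0 γ₁ γ₂ 1)
      = WithLp.toLp 2 fun j : Fin 11 => if j = 1 then γ₁ * (cc : ℂ) else if j = 3 then (cc : ℂ) else 0 := by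
  have h2 : Real.sqrt 2 ≠ 0 := by positivity
  have h3 : Real.sqrt 3 ≠ 0 := by positivity
  have h11 : Real.sqrt 11 ≠ 0 := by positivity
  ext j
  fin_cases j <;>
  · simp only [psiFam0, Matrix.cons_val_one, Matrix.head_cons, hX3, opShift, opX2, contractA,
      Fin.sum_univ_succ, Fin.sum_univ_zero]
    simp only [phi00, e11, PiLp.add_apply, PiLp.smul_apply, PiLp.sub_apply,
      EuclideanSpace.single_apply, smul_eq_mul, lift2, lift9, PiLp.toLp_apply]
    norm_num [cc, Fin.ext_iff, show ((1:Fin 11):ℕ) = 1 from rfl, show ((2:Fin 11):ℕ) = 2 from rfl,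
      show ((3:Fin 11):ℕ) = 3 from rfl, show ((6:Fin 11):ℕ) = 6 from rfl,
      show ((8:Fin 11):ℕ) = 8 from rfl, sq9, sq36, sq12, sq132, map_ofNat]
    first
    | done
    | (push_cast; field_simp <;> ring)

set_option maxHeartbeats 1000000 in
lemma v2_eq (γ₁ γ₂ : ℂ) :
    contractA (phi00 γ₂) (psiFam0 γ₁ γ₂ 2)
      = WithLp.toLp 2 fun j : Fin 11 => if j = 0 then γ₂ * (cc : ℂ) else if j = 2 then -(γ₂ * (cc : ℂ)) else 0 := by
  have h2 : Real.sqrt 2 ≠ 0 := by positivity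
  have h3 : Real.sqrt 3 ≠ 0 := by positivity
  have h11 : Real.sqrt 11 ≠ 0 := by positivity
  ext j
  fin_cases j <;>
  · simp only [psiFam0, Matrix.cons_val_two, Matrix.tail_cons, Matrix.head_cons, hX6, opShift,
      opZ, contractA, Fin.sum_univ_succ, Fin.sum_univ_zero]
    simp only [phi00, e11, PiLp.add_apply, PiLp.smul_apply, PiLp.sub_apply,
      EuclideanSpace.single_apply, smul_eq_mul, lift2, lift9, PiLp.toLp_apply]
    norm_num [cc, Fin.ext_iff, show ((1:Fin 11):ℕ) = 1 from rfl, show ((2:Fin 11):ℕ) = 2 from rfl,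
      show ((3:Fin 11):ℕ) = 3 from rfl, show ((6:Fin 11):ℕ) = 6 from rfl,
      show ((8:Fin 11):ℕ) = 8 from rfl, sq9, sq36, sq12, sq132, map_ofNat]
    first
    | done
    | (push_cast; field_simp <;> ring)

set_option maxHeartbeats 1000000 in
/-- The three vectors `(⟨φ_{0|0}| ⊗ I)|ψ_l^{(0)}⟩`, `l = 0,1,2`, are pairwise orthogonal
and have equal norms. -/
theorem contracted_states_orthogonal_equal_norm (γ₁ γ₂ : ℂ) (h₁ : ‖γ₁‖ = 1) (h₂ : ‖γ₂‖ = 1) :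
    (∀ l m : Fin 3, l ≠ m →
      (inner ℂ (contractA (phi00 γ₂) (psiFam0 γ₁ γ₂ l))
        (contractA (phi00 γ₂) (psiFam0 γ₁ γ₂ m)) : ℂ) = 0) ∧
    (∀ l m : Fin 3,
      ‖contractA (phi00 γ₂) (psiFam0 γ₁ γ₂ l)‖ = ‖contractA (phi00 γ₂) (psiFam0 γ₁ γ₂ m)‖) := by
  constructor
  · intro l m hlm
    fin_cases l <;> fin_cases m <;>
      first
      | exact absurd rfl hlm
      | (simp only [show (⟨0, by omega⟩ : Fin 3) = 0 from rfl, show (⟨1, by omega⟩ : Fin 3) = 1 from rfl,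
           show (⟨2, by omega⟩ : Fin 3) = 2 from rfl]
         simp only [v0_eq, v1_eq, v2_eq, PiLp.inner_apply, RCLike.inner_apply,
          Fin.sum_univ_succ, Fin.sum_univ_zero]
         norm_num [Fin.ext_iff, show ((1:Fin 11):ℕ) = 1 from rfl, show ((2:Fin 11):ℕ) = 2 from rfl,
           show ((3:Fin 11):ℕ) = 3 from rfl, map_mul, Complex.conj_ofReal]
         try ring_nf)
  · intro l m
    fin_cases l <;> fin_cases m <;>
    first
    | rfl
    | (simp only [show (⟨0, by omega⟩ : Fin 3) = 0 from rfl, show (⟨1, by omega⟩ : Fin 3) = 1 from rfl,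
        show (⟨2, by omega⟩ : Fin 3) = 2 from rfl]
       simp only [v0_eq, v1_eq, v2_eq]
       rw [EuclideanSpace.norm_eq, EuclideanSpace.norm_eq]
       simp only [Fin.sum_univ_succ, PiLp.toLp_apply]
       norm_num [Fin.sum_univ_succ, Fin.ext_iff, show ((1:Fin 11):ℕ) = 1 from rfl,
         show ((2:Fin 11):ℕ) = 2 from rfl, show ((3:Fin 11):ℕ) = 3 from rfl,
         norm_mul, norm_neg, h₁, h₂, Complex.norm_real,
         _root_.abs_of_nonneg (show (0:ℝ) ≤ cc from Real.sqrt_nonneg _)])
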